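/- arXiv:2408.06042 — 2 statements merged into one kernel-verified Lean document; each statement's English description precedes it below -/
import Mathlib

section
/- Let E be a real inner product space, F : E → ℝ a differentiable function whose gradient ∇F is L-Lipschitz for some L > 0, and let η > 0 satisfy η ≤ 1/L. Let x ∈ E, let V_1, …, V_n ∈ E with mean V̄ = (1/n)·Σ_k V_k, and suppose V̄ = ∇F(x). If Q ∈ E satisfies the robustness deviation bound ‖Q − V̄‖² ≤ (α/n)·Σ_{k=1}^n ‖V_k − V̄‖² for some α ≥ 0, then F(x − η·Q) ≤ F(x) − (η/2)·‖∇F(x)‖² + (η·α/(2n))·Σ_{k=1}^n ‖V_k − V̄‖². -/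
open scoped RealInnerProductSpace

open intervalIntegral in
lemma descent_aux {E : Type*} [NormedAddCommGroup E] [InnerProductSpace ℝ E] [CompleteSpace E]
    (F : E → ℝ) (L : ℝ) (hL : 0 < L) (hdiff : Differentiable ℝ F)
    (hlip : ∀ x y : E, ‖gradient F x - gradient F y‖ ≤ L * ‖x - y‖)
    (x v : E) :
    F (x + v) ≤ F x + ⟪gradient F x, v⟫ + L / 2 * ‖v‖ ^ 2 := by
  set g := gradient F with hg
  have hgcont : Continuous g := by
    have : LipschitzWith (Real.toNNReal L) g :=
      LipschitzWith.of_dist_le_mul (fun a b => by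
        simpa [dist_eq_norm, Real.coe_toNNReal _ hL.le] using hlip a b)
    exact this.continuous
  have hline : ∀ t : ℝ, HasDerivAt (fun t : ℝ => x + t • v) v t := by
    intro t
    simpa using ((hasDerivAt_id t).smul_const v).const_add x
  have hderiv : ∀ t : ℝ, HasDerivAt (fun t : ℝ => F (x + t • v))
      (⟪g (x + t • v), v⟫) t := by
    intro t
    have h1 := (hdiff (x + t • v)).hasGradientAt.hasFDerivAt
    have h2 := h1.comp_hasDerivAt t (hline t)
    exact h2
  have hcont : Continuous fun t : ℝ => ⟪g (x + t • v), v⟫ := by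
    exact (hgcont.comp (by continuity)).inner continuous_const
  have hint : IntervalIntegrable (fun t : ℝ => ⟪g (x + t • v), v⟫)
      MeasureTheory.volume 0 1 := hcont.intervalIntegrable 0 1
  have hftc : ∫ t in (0:ℝ)..1, ⟪g (x + t • v), v⟫ = F (x + v) - F x := by
    have := integral_eq_sub_of_hasDerivAt (f := fun t : ℝ => F (x + t • v))
      (f' := fun t : ℝ => ⟪g (x + t • v), v⟫)
      (fun t _ => hderiv t) hint
    simpa using this
  have hmono : ∫ t in (0:ℝ)..1, (⟪g (x + t • v), v⟫ - ⟪g x, v⟫)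
      ≤ ∫ t in (0:ℝ)..1, (L * ‖v‖ ^ 2) * t := by
    apply integral_mono_on (by norm_num)
    · exact (hcont.sub continuous_const).intervalIntegrable 0 1
    · exact (continuous_const.mul continuous_id).intervalIntegrable 0 1
    · intro t ht
      have h1 : ⟪g (x + t • v), v⟫ - ⟪g x, v⟫ = ⟪g (x + t • v) - g x, v⟫ := by
        rw [inner_sub_left]
      rw [h1]
      have h2 := real_inner_le_norm (g (x + t • v) - g x) v
      have h3 : ‖g (x + t • v) - g x‖ ≤ L * (t * ‖v‖) := by
        have := hlip (x + t • v) x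
        simpa [abs_of_nonneg ht.1, norm_smul] using this
      nlinarith [norm_nonneg v, ht.1]
  have hval : ∫ t in (0:ℝ)..1, (L * ‖v‖ ^ 2) * t = L / 2 * ‖v‖ ^ 2 := by
    rw [integral_const_mul, integral_id]
    ring
  have hsub : ∫ t in (0:ℝ)..1, (⟪g (x + t • v), v⟫ - ⟪g x, v⟫)
      = F (x + v) - F x - ⟪g x, v⟫ := by
    rw [integral_sub hint ((continuous_const).intervalIntegrable 0 1), hftc]
    simp
  rw [hsub, hval] at hmono
  linarith

/-- One aggregation step with a robust aggregation output decreases `F` up to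
the robustness-induced error: combining the descent inequality from the proof
of Theorem 2 (Convergence Analysis) with the `(h, α)`-robustness deviation
bound, assuming the honest mean equals the true gradient at the iterate. -/
theorem robust_aggregation_descent
    {E : Type*} [NormedAddCommGroup E] [InnerProductSpace ℝ E] [CompleteSpace E]
    (F : E → ℝ) (L η : ℝ) (hL : 0 < L)
    (hdiff : Differentiable ℝ F)
    (hlip : ∀ x y : E, ‖gradient F x - gradient F y‖ ≤ L * ‖x - y‖)
    (hη : 0 < η) (hηL : η ≤ 1 / L)
    (x : E) {n : ℕ} (V : Fin n → E)
    (Vbar : E) (hVbar : Vbar = (n : ℝ)⁻¹ • ∑ k, V k)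
    (hmean : Vbar = gradient F x)
    (Q : E) (α : ℝ) (hα : 0 ≤ α)
    (hrobust : ‖Q - Vbar‖ ^ 2 ≤ (α / n) * ∑ k, ‖V k - Vbar‖ ^ 2) :
    F (x - η • Q) ≤
      F x - (η / 2) * ‖gradient F x‖ ^ 2 +
        (η * α / (2 * n)) * ∑ k, ‖V k - Vbar‖ ^ 2 := by
  set g := gradient F x with hg
  have hdes := descent_aux F L hL hdiff hlip x (-(η • Q))
  have hxv : x + -(η • Q) = x - η • Q := by abel
  rw [hxv] at hdes
  have hinner : ⟪g, -(η • Q)⟫ = -(η * ⟪g, Q⟫) := by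
    rw [inner_neg_right, real_inner_smul_right]
  have hnrm : ‖-(η • Q)‖ ^ 2 = η ^ 2 * ‖Q‖ ^ 2 := by
    rw [norm_neg, norm_smul, Real.norm_eq_abs, abs_of_pos hη]; ring
  rw [hinner, hnrm] at hdes
  have hLη : L * η ≤ 1 := by
    rw [le_div_iff₀ hL] at hηL; linarith
  have h1 : L / 2 * (η ^ 2 * ‖Q‖ ^ 2) ≤ η / 2 * ‖Q‖ ^ 2 := by
    nlinarith [sq_nonneg ‖Q‖, hη.le]
  have hexp : ‖Q - g‖ ^ 2 = ‖Q‖ ^ 2 - 2 * ⟪Q, g⟫ + ‖g‖ ^ 2 := by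
    rw [@norm_sub_sq_real]
  have hsym : ⟪g, Q⟫ = ⟪Q, g⟫ := real_inner_comm Q g
  have hQg : ‖Q - g‖ ^ 2 ≤ (α / n) * ∑ k, ‖V k - Vbar‖ ^ 2 := by
    rw [← hmean]; exact hrobust
  have hfin : η * α / (2 * n) = η / 2 * (α / n) := by
    rcases eq_or_ne (n : ℝ) 0 with h | h
    · simp [h]
    · field_simp; try ring
  rw [hfin]
  nlinarith [hdes, hQg, hη.le]
end

section
/- Let (Ω, 𝒫) be a probability space, E a real inner product space (finite-dimensional), X : Ω → E a square-integrable random vector with E[X] = 0 and E[‖X‖²] ≤ σ², let e, d ∈ E be fixed vectors, and let β ∈ (0, 1]. Then E[‖β·X + (1 − β)·(e + d)‖²] ≤ (1 − β/2)·‖e‖² + (2/β)·‖d‖² + β²·σ². -/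
open MeasureTheory

/-- One-step contraction of the momentum deviation (proof of Theorem 2,
Convergence Analysis): if `X` is a zero-mean noise with second moment at most
`σ²`, `e` the previous deviation and `d` the gradient drift, then
`E‖β•X + (1-β)•(e+d)‖² ≤ (1 - β/2)‖e‖² + (2/β)‖d‖² + β²σ²`. -/
theorem momentum_deviation_contraction
    {Ω : Type*} [MeasurableSpace Ω] (P : Measure Ω) [IsProbabilityMeasure P]
    {E : Type*} [NormedAddCommGroup E] [InnerProductSpace ℝ E]
    [FiniteDimensional ℝ E] [MeasurableSpace E] [BorelSpace E]
    (X : Ω → E) (hmeas : Measurable X) (hL2 : MemLp X 2 P)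
    (hmean : ∫ ω, X ω ∂P = 0)
    (σ : ℝ) (hvar : ∫ ω, ‖X ω‖ ^ 2 ∂P ≤ σ ^ 2)
    (e d : E) (β : ℝ) (hβ0 : 0 < β) (hβ1 : β ≤ 1) :
    ∫ ω, ‖β • X ω + (1 - β) • (e + d)‖ ^ 2 ∂P ≤
      (1 - β / 2) * ‖e‖ ^ 2 + (2 / β) * ‖d‖ ^ 2 + β ^ 2 * σ ^ 2 := by
  set v : E := e + d with hv
  have hXint : Integrable X P := hL2.integrable (by norm_num)
  have hX2 : Integrable (fun ω => ‖X ω‖ ^ 2) P := hL2.norm.integrable_sq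
  have hinner : Integrable (fun ω => (inner ℝ v (X ω) : ℝ)) P := hXint.const_inner v
  have hexp : ∀ ω, ‖β • X ω + (1 - β) • v‖ ^ 2 =
      β ^ 2 * ‖X ω‖ ^ 2 + (2 * (β * (1 - β))) * (inner ℝ v (X ω) : ℝ)
        + (1 - β) ^ 2 * ‖v‖ ^ 2 := by
    intro ω
    rw [norm_add_sq_real, norm_smul, norm_smul, real_inner_smul_left,
      real_inner_smul_right, real_inner_comm]
    have h1 : ‖β‖ = β := by rw [Real.norm_eq_abs, abs_of_pos hβ0]
    have h2 : ‖(1 - β)‖ = 1 - β := by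
      rw [Real.norm_eq_abs, abs_of_nonneg (by linarith)]
    rw [h1, h2]; ring
  have hint : ∫ ω, ‖β • X ω + (1 - β) • v‖ ^ 2 ∂P =
      β ^ 2 * (∫ ω, ‖X ω‖ ^ 2 ∂P) + (1 - β) ^ 2 * ‖v‖ ^ 2 := by
    simp only [hexp]
    rw [integral_add (by exact (hX2.const_mul _).add (hinner.const_mul _))
        (integrable_const _),
      integral_add (hX2.const_mul _) (hinner.const_mul _),
      integral_const_mul, integral_const_mul, integral_inner hXint, hmean,
      integral_const]
    simp
  rw [hint]
  have hnv : ‖v‖ ≤ ‖e‖ + ‖d‖ := norm_add_le e d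
  have h0e : (0:ℝ) ≤ ‖e‖ := norm_nonneg _
  have h0d : (0:ℝ) ≤ ‖d‖ := norm_nonneg _
  have h0v : (0:ℝ) ≤ ‖v‖ := norm_nonneg _
  have key : (1 - β) ^ 2 * ‖v‖ ^ 2 ≤ (1 - β / 2) * ‖e‖ ^ 2 + (2 / β) * ‖d‖ ^ 2 := by
    have hv2 : ‖v‖ ^ 2 ≤ (‖e‖ + ‖d‖) ^ 2 := by nlinarith
    have step : (1 - β) ^ 2 * (‖e‖ + ‖d‖) ^ 2 ≤
        (1 - β / 2) * ‖e‖ ^ 2 + (2 / β) * ‖d‖ ^ 2 := by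
      have hb : (2 / β) * β = 2 := by field_simp
      nlinarith [sq_nonneg (β * ‖e‖ - 2 * ‖d‖), sq_nonneg ((1-β)*(‖e‖+‖d‖)),
        mul_pos hβ0 hβ0, sq_nonneg (‖e‖ - ‖d‖), sq_nonneg (‖e‖ + ‖d‖),
        mul_nonneg (mul_nonneg h0e h0d) hβ0.le,
        sq_nonneg (β*(‖e‖+‖d‖)), sq_nonneg (β*‖e‖ - ‖d‖)]
    calc (1 - β) ^ 2 * ‖v‖ ^ 2 ≤ (1 - β) ^ 2 * (‖e‖ + ‖d‖) ^ 2 := by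
          nlinarith [sq_nonneg (1 - β)]
      _ ≤ _ := step
  have hβ2 : β ^ 2 * (∫ ω, ‖X ω‖ ^ 2 ∂P) ≤ β ^ 2 * σ ^ 2 := by
    nlinarith [sq_nonneg β]
  linarith
end
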